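/- Under the standing assumption, the stoichiometric subspace S = span_ℝ{g_I h_J + g_J h_I − g − h : g,h ∈ 𝓖, {I,J} ∈ 𝓟 with c({I,J}) > 0} has dimension dim S = ∏_{i ∈ 𝓛} Aᵢ − 1 − Σ_{i ∈ 𝓛} (Aᵢ − 1); equivalently, its orthogonal complement in ℝ^𝓖 has dimension 1 + Σ_{i ∈ 𝓛} (Aᵢ − 1). -/

import Mathlib

open Finset

/-- Recombination of gametes `g` and `h` following pattern `{I, Iᶜ}`:
`(g_I h_J)ᵢ = gᵢ` for `i ∈ I` and `= hᵢ` for `i ∈ J = Iᶜ`. -/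
def recomb {L : Type} [DecidableEq L] {A : L → Type} (I : Finset L)
    (g h : ∀ i, A i) : ∀ i, A i :=
  fun i => if i ∈ I then g i else h i

/-- The stoichiometric subspace
`S = span { g_I h_J + g_J h_I − g − h : g,h ∈ 𝓖, {I,J} ∈ 𝓟 with c({I,J}) > 0 }`,
gametes being identified with standard basis vectors of `ℝ^𝓖`. -/
def stoichSpan {L : Type} [Fintype L] [DecidableEq L] (A : L → Type)
    [∀ i, Fintype (A i)] [∀ i, DecidableEq (A i)]
    (c : Finset L → ℝ) : Submodule ℝ ((∀ i, A i) → ℝ) :=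
  Submodule.span ℝ
    { v | ∃ (g h : ∀ i, A i) (I : Finset L), 0 < c I ∧
        v = fun x => (if x = recomb I g h then (1 : ℝ) else 0)
          + (if x = recomb Iᶜ g h then 1 else 0)
          - (if x = g then 1 else 0) - (if x = h then 1 else 0) }

section Aux

variable {L : Type} [Fintype L] [DecidableEq L]
  {A : L → Type} [∀ i, Fintype (A i)] [∀ i, DecidableEq (A i)]

/-- The linear map sending locus-wise functions to the corresponding additive function. -/
def addMap (L : Type) [Fintype L] (A : L → Type) :
    ((i : L) → (A i → ℝ)) →ₗ[ℝ] ((∀ i, A i) → ℝ) where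
  toFun φ := fun x => ∑ i, φ i (x i)
  map_add' φ ψ := by funext x; simp [Finset.sum_add_distrib]
  map_smul' r φ := by funext x; simp [Finset.mul_sum]

/-- Additivity from the recombination functional equation. -/
lemma additive_of_recombEq [Nonempty L] (f : (∀ i, A i) → ℝ) (r : ∀ i, A i)
    (C : Set (Finset L)) (hsep : ∀ i j : L, i ≠ j → ∃ I ∈ C, i ∈ I ∧ j ∉ I)
    (hf : ∀ (g : ∀ i, A i), ∀ I ∈ C,
      f (recomb I g r) + f (recomb Iᶜ g r) = f g + f r) :
    ∀ g, f g = f r + ∑ i, (f (Function.update r i (g i)) - f r) := by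
  suffices H : ∀ n (g : ∀ i, A i), (univ.filter fun i => g i ≠ r i).card ≤ n →
      f g = f r + ∑ i, (f (Function.update r i (g i)) - f r) by
    intro g; exact H _ g le_rfl
  intro n
  induction n with
  | zero =>
    intro g hg
    have : ∀ i, g i = r i := by
      intro i
      by_contra hi
      have : i ∈ univ.filter fun i => g i ≠ r i := by simp [hi]
      have := Finset.card_pos.2 ⟨i, this⟩
      omega
    have hg' : g = r := funext this
    have hupd : ∀ i, Function.update r i (g i) = r := by
      intro i; rw [this i]; exact Function.update_eq_self i r
    rw [hg']
    simp [hupd]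
  | succ n ih =>
    intro g hg
    set D := univ.filter fun i => g i ≠ r i with hD
    by_cases h1 : D.card ≤ 1
    · -- at most one difference
      rcases Finset.card_le_one_iff_subset_singleton.1 h1 with ⟨i, hi⟩
      have hgval : ∀ j, j ≠ i → g j = r j := by
        intro j hj
        by_contra hjj
        have : j ∈ D := by simp [hD, hjj]
        have := hi this
        simp at this
        exact hj this
      have hgu : g = Function.update r i (g i) := by
        funext j
        by_cases hji : j = i
        · subst hji; simp
        · simp [Function.update_of_ne hji, hgval j hji]
      have hterm : ∀ j, j ≠ i → f (Function.update r j (g j)) - f r = 0 := by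
        intro j hj
        rw [hgval j hj, Function.update_eq_self]
        ring
      rw [Finset.sum_eq_single i]
      · rw [← hgu]; ring
      · intro j _ hj; exact hterm j hj
      · intro h; exact absurd (Finset.mem_univ i) h
    · -- at least two differences
      push_neg at h1
      obtain ⟨i, hiD, j, hjD, hij⟩ := Finset.one_lt_card.1 h1
      obtain ⟨I, hIC, hiI, hjI⟩ := hsep i j hij
      have hgi : g i ≠ r i := by simpa [hD] using hiD
      have hgj : g j ≠ r j := by simpa [hD] using hjD
      set g₁ := recomb I g r with hg₁
      set g₂ := recomb Iᶜ g r with hg₂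
      have hcard : D.card ≤ n + 1 := hg
      have hc1 : (univ.filter fun k => g₁ k ≠ r k).card ≤ n := by
        have hsub : (univ.filter fun k => g₁ k ≠ r k) ⊆ D.erase j := by
          intro k hk
          simp only [mem_filter, mem_univ, true_and] at hk
          have hkI : k ∈ I := by
            by_contra hkI
            exact hk (by simp [hg₁, recomb, hkI])
          refine Finset.mem_erase.2 ⟨?_, ?_⟩
          · rintro rfl; exact hjI hkI
          · simp only [hD, mem_filter, mem_univ, true_and]
            intro hgk; exact hk (by simp [hg₁, recomb, hkI, hgk])
        calc (univ.filter fun k => g₁ k ≠ r k).card ≤ (D.erase j).card :=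
              Finset.card_le_card hsub
          _ = D.card - 1 := Finset.card_erase_of_mem hjD
          _ ≤ n := by omega
      have hc2 : (univ.filter fun k => g₂ k ≠ r k).card ≤ n := by
        have hsub : (univ.filter fun k => g₂ k ≠ r k) ⊆ D.erase i := by
          intro k hk
          simp only [mem_filter, mem_univ, true_and] at hk
          have hkI : k ∉ I := by
            intro hkI
            exact hk (by simp [hg₂, recomb, hkI])
          refine Finset.mem_erase.2 ⟨?_, ?_⟩
          · rintro rfl; exact hkI hiI
          · simp only [hD, mem_filter, mem_univ, true_and]
            intro hgk; exact hk (by simp [hg₂, recomb, hkI, hgk])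
        calc (univ.filter fun k => g₂ k ≠ r k).card ≤ (D.erase i).card :=
              Finset.card_le_card hsub
          _ = D.card - 1 := Finset.card_erase_of_mem hiD
          _ ≤ n := by omega
      have e1 := ih g₁ hc1
      have e2 := ih g₂ hc2
      have heq := hf g I hIC
      have hterm : ∀ k, (f (Function.update r k (g₁ k)) - f r)
          + (f (Function.update r k (g₂ k)) - f r)
          = f (Function.update r k (g k)) - f r := by
        intro k
        by_cases hkI : k ∈ I
        · have h1' : g₁ k = g k := by simp [hg₁, recomb, hkI]
          have h2' : g₂ k = r k := by simp [hg₂, recomb, hkI]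
          rw [h1', h2', Function.update_eq_self]; ring
        · have h1' : g₁ k = r k := by simp [hg₁, recomb, hkI]
          have h2' : g₂ k = g k := by simp [hg₂, recomb, hkI]
          rw [h1', h2', Function.update_eq_self]; ring
      have hsum : (∑ k, (f (Function.update r k (g₁ k)) - f r))
          + (∑ k, (f (Function.update r k (g₂ k)) - f r))
          = ∑ k, (f (Function.update r k (g k)) - f r) := by
        rw [← Finset.sum_add_distrib]
        exact Finset.sum_congr rfl fun k _ => hterm k
      have : f g = f g₁ + f g₂ - f r := by
        rw [hg₁, hg₂] at *; linarith [heq]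
      rw [this, e1, e2, ← hsum]; ring

end Aux

/-- **Dimension of the stoichiometric subspace (Corollary 3).**
Under the standing assumption, the stoichiometric subspace `S` has dimension
`dim S = ∏ᵢ Aᵢ − 1 − Σᵢ (Aᵢ − 1)`; equivalently, its orthogonal complement in `ℝ^𝓖`
has dimension `1 + Σᵢ (Aᵢ − 1)`. -/
theorem stoichiometric_subspace_dimension
    {L : Type} [Fintype L] [DecidableEq L] [Nonempty L]
    (A : L → Type) [∀ i, Fintype (A i)] [∀ i, DecidableEq (A i)]
    (hA : ∀ i, 2 ≤ Fintype.card (A i))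
    (c : Finset L → ℝ) (hc : ∀ I, 0 ≤ c I) (hcsym : ∀ I, c I = c Iᶜ)
    (hsep : ∀ i j : L, i ≠ j →
      0 < ∑ I ∈ univ.filter (fun I : Finset L => i ∈ I ∧ j ∉ I), c I) :
    Module.finrank ℝ (stoichSpan A c)
        = ∏ i : L, Fintype.card (A i) - (1 + ∑ i : L, (Fintype.card (A i) - 1)) ∧
    Module.finrank ℝ (stoichSpan A c) + (1 + ∑ i : L, (Fintype.card (A i) - 1))
        = ∏ i : L, Fintype.card (A i) := by
  classical
  have : ∀ i, Nonempty (A i) := fun i =>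
    Fintype.card_pos_iff.1 (by have := hA i; omega)
  have hGne : Nonempty (∀ i, A i) := ⟨fun i => Classical.arbitrary (A i)⟩
  -- the additive subspace W
  set W : Submodule ℝ ((∀ i, A i) → ℝ) := LinearMap.range (addMap L A) with hW
  -- finrank of W
  -- the sum functional on L → ℝ
  set sumF : (L → ℝ) →ₗ[ℝ] ℝ :=
    { toFun := fun u => ∑ i, u i
      map_add' := fun u v => by simp [Finset.sum_add_distrib]
      map_smul' := fun r u => by simp [Finset.mul_sum] } with hsumF
  set M : (L → ℝ) →ₗ[ℝ] ((i : L) → A i → ℝ) :=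
    { toFun := fun u => fun i _ => u i
      map_add' := fun u v => rfl
      map_smul' := fun r u => rfl } with hM
  have hMinj : Function.Injective M := by
    intro u v huv
    funext i
    have := congrFun (congrFun huv i) (Classical.arbitrary (A i))
    exact this
  have hkerEq : LinearMap.ker (addMap L A) = (LinearMap.ker sumF).map M := by
    apply le_antisymm
    · intro φ hφ
      rw [LinearMap.mem_ker] at hφ
      set x₀ : ∀ i, A i := Classical.arbitrary _ with hx₀
      have hval : ∀ x : (∀ i, A i), ∑ i, φ i (x i) = 0 := fun x => congrFun hφ x
      have hconst : ∀ i (a : A i), φ i a = φ i (x₀ i) := by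
        intro i a
        have h1 := hval (Function.update x₀ i a)
        have h2 := hval x₀
        rw [← Finset.add_sum_erase univ _ (mem_univ i)] at h1 h2
        have herase : ∑ j ∈ univ.erase i, φ j (Function.update x₀ i a j)
            = ∑ j ∈ univ.erase i, φ j (x₀ j) := by
          apply Finset.sum_congr rfl
          intro j hj
          rw [Function.update_of_ne (Finset.ne_of_mem_erase hj)]
        rw [Function.update_self] at h1
        rw [herase] at h1
        linarith
      refine ⟨fun i => φ i (x₀ i), ?_, ?_⟩
      · simp only [SetLike.mem_coe, LinearMap.mem_ker]
        simpa [hsumF] using hval x₀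
      · funext i a
        exact (hconst i a).symm
    · rintro _ ⟨u, hu, rfl⟩
      simp only [SetLike.mem_coe, LinearMap.mem_ker] at hu ⊢
      funext x
      simpa [addMap, hM, hsumF] using hu
  have hkerW : Module.finrank ℝ (LinearMap.ker (addMap L A)) = Fintype.card L - 1 := by
    rw [hkerEq]
    rw [← LinearEquiv.finrank_eq (Submodule.equivMapOfInjective M hMinj (LinearMap.ker sumF))]
    -- finrank of ker sumF
    have hsurj : Function.Surjective sumF := by
      intro r
      refine ⟨fun _ => r / Fintype.card L, ?_⟩
      have hL : (0 : ℝ) < Fintype.card L := by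
        exact_mod_cast Fintype.card_pos
      simp only [hsumF, LinearMap.coe_mk, AddHom.coe_mk]
      rw [Finset.sum_const, Finset.card_univ, nsmul_eq_mul]
      field_simp
    have h1 := LinearMap.finrank_range_add_finrank_ker sumF
    rw [LinearMap.range_eq_top.2 hsurj, finrank_top, Module.finrank_fintype_fun_eq_card,
      Module.finrank_self] at h1
    omega
  have hrankW : Module.finrank ℝ W = 1 + ∑ i : L, (Fintype.card (A i) - 1) := by
    have h1 := LinearMap.finrank_range_add_finrank_ker (addMap L A)
    have h2 : Module.finrank ℝ ((i : L) → (A i → ℝ)) = ∑ i : L, Fintype.card (A i) := by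
      rw [Module.finrank_pi_fintype]
      congr 1; funext i
      exact Module.finrank_fintype_fun_eq_card ℝ
    rw [hkerW, h2] at h1
    have h3 : ∑ i : L, (Fintype.card (A i) - 1) + Fintype.card L
        = ∑ i : L, Fintype.card (A i) := by
      have hcL : Fintype.card L = ∑ _i : L, 1 := by simp
      rw [hcL, ← Finset.sum_add_distrib]
      apply Finset.sum_congr rfl
      intro i _
      have := hA i; omega
    have h4 : 1 ≤ Fintype.card L := Fintype.card_pos
    rw [hW]
    omega
  -- Euclidean transport
  set e : ((∀ i, A i) → ℝ) ≃ₗ[ℝ] EuclideanSpace ℝ (∀ i, A i) := (WithLp.linearEquiv 2 ℝ ((∀ i, A i) → ℝ)).symm with he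
  set S' : Submodule ℝ (EuclideanSpace ℝ (∀ i, A i)) := (stoichSpan A c).map e.toLinearMap with hS'
  set W' : Submodule ℝ (EuclideanSpace ℝ (∀ i, A i)) := W.map e.toLinearMap with hW'
  -- inner products with generators
  have hinner : ∀ (v w : (∀ i, A i) → ℝ), (inner ℝ (e v) (e w) : ℝ) = ∑ x : (∀ i, A i), v x * w x := by
    intro v w
    rw [PiLp.inner_apply]
    apply Finset.sum_congr rfl
    intro x _
    simp only [RCLike.inner_apply, starRingEnd_apply, star_trivial]
    rw [mul_comm]; rfl
  -- generator pairing
  have hgen : ∀ (f : (∀ i, A i) → ℝ) (g h : ∀ i, A i) (I : Finset L),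
      (∑ x : (∀ i, A i), ((if x = recomb I g h then (1:ℝ) else 0)
          + (if x = recomb Iᶜ g h then 1 else 0)
          - (if x = g then 1 else 0) - (if x = h then 1 else 0)) * f x)
        = f (recomb I g h) + f (recomb Iᶜ g h) - f g - f h := by
    intro f g h I
    simp only [sub_mul, add_mul, ite_mul, one_mul, zero_mul]
    rw [Finset.sum_sub_distrib, Finset.sum_sub_distrib, Finset.sum_add_distrib]
    simp [Finset.sum_ite_eq']
  -- Part 1: S' ≤ W'ᗮ
  have hSW : S' ≤ W'ᗮ := by
    rw [hS', stoichSpan, Submodule.map_span, Submodule.span_le]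
    rintro _ ⟨v, ⟨g, h, I, hI, rfl⟩, rfl⟩
    rw [SetLike.mem_coe, Submodule.mem_orthogonal]
    rintro _ ⟨w, ⟨φ, rfl⟩, rfl⟩
    have h1 : (inner ℝ (e (addMap L A φ)) (e (fun x => (if x = recomb I g h then (1:ℝ) else 0)
          + (if x = recomb Iᶜ g h then 1 else 0)
          - (if x = g then 1 else 0) - (if x = h then 1 else 0))) : ℝ)
        = ∑ x : (∀ i, A i), (addMap L A φ) x * ((if x = recomb I g h then (1:ℝ) else 0)
          + (if x = recomb Iᶜ g h then 1 else 0)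
          - (if x = g then 1 else 0) - (if x = h then 1 else 0)) := hinner _ _
    have h2 : ∑ x : (∀ i, A i), (addMap L A φ) x * ((if x = recomb I g h then (1:ℝ) else 0)
          + (if x = recomb Iᶜ g h then 1 else 0)
          - (if x = g then 1 else 0) - (if x = h then 1 else 0))
        = (addMap L A φ) (recomb I g h) + (addMap L A φ) (recomb Iᶜ g h)
          - (addMap L A φ) g - (addMap L A φ) h := by
      rw [← hgen (addMap L A φ) g h I]
      apply Finset.sum_congr rfl
      intro x _
      ring
    have h3 : (addMap L A φ) (recomb I g h) + (addMap L A φ) (recomb Iᶜ g h)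
          - (addMap L A φ) g - (addMap L A φ) h = 0 := by
      simp only [addMap, LinearMap.coe_mk, AddHom.coe_mk]
      rw [← Finset.sum_add_distrib, ← Finset.sum_sub_distrib, ← Finset.sum_sub_distrib]
      apply Finset.sum_eq_zero
      intro i _
      by_cases hiI : i ∈ I
      · simp [recomb, hiI]
      · simp [recomb, hiI]
    simp only [LinearEquiv.coe_coe]
    rw [h1, h2, h3]
  -- Part 2: sup is everything
  have hsup : S' ⊔ W' = ⊤ := by
    rw [← Submodule.orthogonal_eq_bot_iff, eq_bot_iff]
    intro f hf
    rw [Submodule.mem_orthogonal] at hf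
    set f' : (∀ i, A i) → ℝ := e.symm f with hf'
    have hfe : e f' = f := e.apply_symm_apply f
    -- functional equation
    have hfeq : ∀ (g h : ∀ i, A i) (I : Finset L), 0 < c I →
        f' (recomb I g h) + f' (recomb Iᶜ g h) = f' g + f' h := by
      intro g h I hI
      have hmem : e (fun x => (if x = recomb I g h then (1:ℝ) else 0)
          + (if x = recomb Iᶜ g h then 1 else 0)
          - (if x = g then 1 else 0) - (if x = h then 1 else 0)) ∈ S' ⊔ W' := by
        apply Submodule.mem_sup_left
        exact Submodule.mem_map_of_mem (Submodule.subset_span ⟨g, h, I, hI, rfl⟩)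
      have h0 := hf _ hmem
      rw [← hfe] at h0
      rw [hinner] at h0
      have h2 : ∑ x : (∀ i, A i), (fun x => (if x = recomb I g h then (1:ℝ) else 0)
          + (if x = recomb Iᶜ g h then 1 else 0)
          - (if x = g then 1 else 0) - (if x = h then 1 else 0)) x * f' x
          = f' (recomb I g h) + f' (recomb Iᶜ g h) - f' g - f' h := hgen f' g h I
      rw [h2] at h0
      linarith
    -- separation gives a separating pattern with positive rate
    have hsep' : ∀ i j : L, i ≠ j → ∃ I ∈ {I : Finset L | 0 < c I}, i ∈ I ∧ j ∉ I := by
      intro i j hij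
      by_contra hcon
      push_neg at hcon
      have : ∑ I ∈ univ.filter (fun I : Finset L => i ∈ I ∧ j ∉ I), c I = 0 := by
        apply Finset.sum_eq_zero
        intro I hI
        simp only [mem_filter, mem_univ, true_and] at hI
        have h1 := hcon I
        rcases lt_or_eq_of_le (hc I) with hlt | heq
        · exact absurd (h1 hlt hI.1) hI.2
        · exact heq.symm
      linarith [hsep i j hij]
    set r : ∀ i, A i := Classical.arbitrary _ with hr
    have hadd := additive_of_recombEq f' r {I : Finset L | 0 < c I} hsep'
      (fun g I hI => hfeq g r I hI)
    -- f' is additive, hence in W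
    have hf'W : f' ∈ W := by
      refine ⟨fun i a => (f' (Function.update r i a) - f' r)
        + f' r / Fintype.card L, ?_⟩
      funext g
      have hcL : (0 : ℝ) < Fintype.card L := by exact_mod_cast Fintype.card_pos
      simp only [addMap, LinearMap.coe_mk, AddHom.coe_mk]
      rw [Finset.sum_add_distrib, hadd g]
      have h5 : ∑ _i : L, f' r / (Fintype.card L : ℝ) = f' r := by
        rw [Finset.sum_const, Finset.card_univ, nsmul_eq_mul]
        field_simp
      rw [h5]
      ring
    have hfW' : f ∈ S' ⊔ W' := Submodule.mem_sup_right (by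
      rw [← hfe]; exact Submodule.mem_map_of_mem hf'W)
    have : (inner ℝ f f : ℝ) = 0 := hf f hfW'
    rwa [inner_self_eq_zero] at this
  -- Part 3: inf is trivial
  have hinf : S' ⊓ W' = ⊥ := by
    rw [eq_bot_iff]
    rintro v ⟨hvS, hvW⟩
    have hvO : v ∈ W'ᗮ := hSW hvS
    rw [Submodule.mem_orthogonal] at hvO
    have : (inner ℝ v v : ℝ) = 0 := hvO v hvW
    rw [inner_self_eq_zero] at this
    simpa using this
  -- Assemble
  have hdim := Submodule.finrank_sup_add_finrank_inf_eq S' W'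
  rw [hsup, hinf, finrank_top, finrank_bot] at hdim
  have htot : Module.finrank ℝ (EuclideanSpace ℝ (∀ i, A i))
      = ∏ i : L, Fintype.card (A i) := by
    rw [finrank_euclideanSpace, Fintype.card_pi]
  have hS'rank : Module.finrank ℝ S' = Module.finrank ℝ (stoichSpan A c) :=
    LinearEquiv.finrank_map_eq e _
  have hW'rank : Module.finrank ℝ W' = Module.finrank ℝ W :=
    LinearEquiv.finrank_map_eq e _
  rw [htot, hS'rank, hW'rank, hrankW] at hdim
  constructor
  · omega
  · omega
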